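/- Let P_d, P_g be probability measures on a finite set X with P_d(x) + P_g(x) > 0 for all x, and let P_l, Q_l be the level-l progressively augmented joint distributions on X × {0,1}^l. Then the function D*(x, s) = P_l(x,s)/(P_l(x,s) + Q_l(x,s)) satisfies D*(x,s) = P_d(x)/(P_d(x)+P_g(x)) when the parity of s is 0, and D*(x,s) = P_g(x)/(P_d(x)+P_g(x)) when the parity of s is 1. -/

import Mathlib

noncomputable def klDivF {X : Type*} [Fintype X] (P Q : X → ℝ) : ℝ :=
  ∑ x, P x * Real.log (P x / Q x)

noncomputable def jsDivF {X : Type*} [Fintype X] (P Q : X → ℝ) : ℝ :=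
  (klDivF P (fun x => (P x + Q x) / 2) + klDivF Q (fun x => (P x + Q x) / 2)) / 2

def IsProbF {X : Type*} [Fintype X] (P : X → ℝ) : Prop :=
  (∀ x, 0 ≤ P x) ∧ ∑ x, P x = 1


noncomputable def PAl {X : Type*} : (l : ℕ) → (P Q : X → ℝ) → X × (Fin l → Bool) → ℝ
  | 0, P, _, p => P p.1
  | (l + 1), P, Q, p =>
      if p.2 (Fin.last l) then PAl l Q P (p.1, fun i => p.2 i.castSucc) / 2
      else PAl l P Q (p.1, fun i => p.2 i.castSucc) / 2

set_option maxRecDepth 4000 in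
lemma PAl_eq {X : Type*} (l : ℕ) (P Q : X → ℝ) (x : X) (s : Fin l → Bool) :
    PAl l P Q (x, s) =
      (if (Finset.univ.filter (fun i => s i = true)).card % 2 = 1 then Q x else P x) / 2 ^ l := by
  induction l generalizing P Q with
  | zero => simp [PAl]
  | succ l ih =>
    have hcard : (Finset.univ.filter (fun i : Fin (l+1) => s i = true)).card =
        (Finset.univ.filter (fun i : Fin l => s i.castSucc = true)).card
          + (if s (Fin.last l) then 1 else 0) := by
      rw [Finset.card_filter, Finset.card_filter, Fin.sum_univ_castSucc]
    rw [PAl]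
    simp only
    set c := (Finset.univ.filter (fun i : Fin l => s i.castSucc = true)).card with hc
    by_cases h : s (Fin.last l) = true
    · rw [if_pos h] at hcard
      rw [if_pos h, ih Q P, hcard]
      rcases Nat.mod_two_eq_zero_or_one c with h0 | h1
      · rw [if_neg (by omega), if_pos (by omega), div_div, pow_succ]
      · rw [if_pos h1, if_neg (by omega), div_div, pow_succ]
    · rw [if_neg h, add_zero] at hcard
      rw [if_neg h, ih P Q, hcard, div_div, pow_succ]

theorem stmt6 {X : Type*} [Fintype X] (P Q : X → ℝ) (hP : IsProbF P) (hQ : IsProbF Q)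
    (hpos : ∀ x, 0 < P x + Q x) :
    ∀ (l : ℕ) (x : X) (s : Fin l → Bool),
      PAl l P Q (x, s) / (PAl l P Q (x, s) + PAl l Q P (x, s)) =
        if (Finset.univ.filter (fun i => s i = true)).card % 2 = 1 then Q x / (P x + Q x)
        else P x / (P x + Q x) := by
  intro l x s
  rw [PAl_eq, PAl_eq]
  have h2 : (0:ℝ) < 2 ^ l := by positivity
  have hne : P x + Q x ≠ 0 := (hpos x).ne'
  by_cases h : (Finset.univ.filter (fun i => s i = true)).card % 2 = 1
  · rw [if_pos h, if_pos h, if_pos h, ← add_div, add_comm (Q x) (P x)]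
    field_simp
  · rw [if_neg h, if_neg h, if_neg h, ← add_div]
    field_simp
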